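/- Define p(n) = Σ_λ (-1)^λ · C(n, ⌊(n+5λ)/2⌋) over all integers λ. Then p(n) equals the Fibonacci number F(n+1) for all n ≥ 0 (with F(1) = F(2) = 1). -/
import Mathlib


/-- Binomial coefficient with integer arguments, zero out of range. -/
def C (n k : ℤ) : ℤ := if 0 ≤ k ∧ k ≤ n then (n.toNat.choose k.toNat : ℤ) else 0

/-- `p n = Σ_λ (-1)^λ C(n, ⌊(n+5λ)/2⌋)`, the sum over all integers `λ`. -/
noncomputable def p (n : ℤ) : ℤ :=
  ∑ᶠ l : ℤ, (-1 : ℤ) ^ l.natAbs * C n ((n + 5 * l).fdiv 2)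

namespace GS1Aux

def f (n l : ℤ) : ℤ := (-1 : ℤ) ^ l.natAbs * C n ((n + 5 * l).fdiv 2)

lemma p_eq (n : ℤ) : p n = ∑ᶠ l : ℤ, f n l := rfl

lemma C_of_mem {n k : ℤ} (h1 : 0 ≤ k) (h2 : k ≤ n) :
    C n k = (n.toNat.choose k.toNat : ℤ) := if_pos ⟨h1, h2⟩

lemma C_of_not {n k : ℤ} (h : k < 0 ∨ n < k) : C n k = 0 := if_neg (by omega)

lemma C_pascal (n k : ℤ) (hn : 0 ≤ n) : C (n + 1) k = C n k + C n (k - 1) := by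
  by_cases h1 : 0 ≤ k
  · by_cases h2 : k ≤ n + 1
    · by_cases h0 : k = 0
      · subst h0
        rw [C_of_mem le_rfl (by omega), C_of_mem le_rfl hn, C_of_not (Or.inl (by omega))]
        simp
      · have hk1 : 1 ≤ k := by omega
        rw [C_of_mem h1 h2, C_of_mem (by omega : (0:ℤ) ≤ k - 1) (by omega : k - 1 ≤ n)]
        have e1 : (n + 1).toNat = n.toNat + 1 := by omega
        have e2 : k.toNat = (k - 1).toNat + 1 := by omega
        rw [e1, e2, Nat.choose_succ_succ']
        by_cases h3 : k ≤ n
        · rw [C_of_mem h1 h3, e2]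
          push_cast
          ring
        · rw [C_of_not (Or.inr (by omega))]
          have e3 : (k - 1).toNat + 1 = n.toNat + 1 := by omega
          have e4 : (k - 1).toNat = n.toNat := by omega
          rw [e3, Nat.choose_succ_self, e4]
          push_cast
          ring
    · rw [C_of_not (Or.inr (by omega)), C_of_not (Or.inr (by omega)),
        C_of_not (Or.inr (by omega))]
      ring
  · rw [C_of_not (Or.inl (by omega)), C_of_not (Or.inl (by omega)),
      C_of_not (Or.inl (by omega))]
    ring

lemma support_f {n N : ℤ} (hn : 0 ≤ n) (hN : n ≤ N) :
    Function.support (f n) ⊆ ↑(Finset.Icc (-N) N) := by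
  intro l hl
  simp only [Finset.coe_Icc, Set.mem_Icc]
  by_contra hcon
  apply hl
  unfold f
  have e := Int.fdiv_eq_ediv_of_nonneg (n + 5 * l) (by norm_num : (0:ℤ) ≤ 2)
  rw [e, C_of_not (by omega), mul_zero]

lemma p_sum {n N : ℤ} (hn : 0 ≤ n) (hN : n ≤ N) :
    p n = ∑ l ∈ Finset.Icc (-N) N, f n l := by
  rw [p_eq]
  exact finsum_eq_sum_of_support_subset _ (support_f hn hN)

lemma p_neg_one : p (-1) = 0 := by
  rw [p_eq]
  have h : ∀ l : ℤ, f (-1) l = 0 := by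
    intro l
    unfold f
    rw [C_of_not (by omega), mul_zero]
  rw [finsum_congr h]
  exact finsum_zero

lemma p_zero : p 0 = 1 := by
  rw [p_eq, finsum_eq_single _ 0]
  · unfold f
    rw [show ((0:ℤ) + 5 * 0).fdiv 2 = 0 from rfl, C_of_mem le_rfl le_rfl]
    norm_num
  · intro l hl
    unfold f
    have e := Int.fdiv_eq_ediv_of_nonneg (0 + 5 * l) (by norm_num : (0:ℤ) ≤ 2)
    rw [e, C_of_not (by omega), mul_zero]

lemma p_one : p 1 = 1 := by
  rw [p_eq, finsum_eq_single _ 0]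
  · unfold f
    rw [show ((1:ℤ) + 5 * 0).fdiv 2 = 0 from rfl, C_of_mem le_rfl (by norm_num)]
    norm_num
  · intro l hl
    unfold f
    have e := Int.fdiv_eq_ediv_of_nonneg (1 + 5 * l) (by norm_num : (0:ℤ) ≤ 2)
    rw [e, C_of_not (by omega), mul_zero]

/-- correction term -/
def w (n l : ℤ) : ℤ :=
  if (n + l) % 2 = 1 then (-1 : ℤ) ^ l.natAbs * C (n - 1) ((n + 5 * l + 1).fdiv 2) else 0

lemma negpow (a b : ℕ) (h : (a + b) % 2 = 1) : (-1 : ℤ) ^ a = -(-1 : ℤ) ^ b := by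
  rcases Nat.even_or_odd a with ha | ha
  · rw [ha.neg_one_pow]
    have hb : Odd b := by
      rw [Nat.odd_iff]; rw [Nat.even_iff] at ha; omega
    rw [hb.neg_one_pow]; norm_num
  · rw [ha.neg_one_pow]
    have hb : Even b := by
      rw [Nat.even_iff]; rw [Nat.odd_iff] at ha; omega
    rw [hb.neg_one_pow]

lemma key (n l : ℤ) (hn : 1 ≤ n) :
    f (n + 1) l = f n l + f (n - 1) l + (w n l - w n (l - 1)) := by
  unfold f w
  have d1 := Int.fdiv_eq_ediv_of_nonneg (n + 1 + 5 * l) (by norm_num : (0:ℤ) ≤ 2)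
  have d2 := Int.fdiv_eq_ediv_of_nonneg (n + 5 * l) (by norm_num : (0:ℤ) ≤ 2)
  have d3 := Int.fdiv_eq_ediv_of_nonneg (n - 1 + 5 * l) (by norm_num : (0:ℤ) ≤ 2)
  have d4 := Int.fdiv_eq_ediv_of_nonneg (n + 5 * l + 1) (by norm_num : (0:ℤ) ≤ 2)
  have d5 := Int.fdiv_eq_ediv_of_nonneg (n + 5 * (l - 1) + 1) (by norm_num : (0:ℤ) ≤ 2)
  have hp1 := C_pascal n ((n + 5 * l).fdiv 2) (by omega)
  rcases Int.even_or_odd (n + 5 * l) with ⟨k, hk⟩ | ⟨k, hk⟩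
  · -- even case : n + 5l = 2k
    have e1 : (n + 1 + 5 * l).fdiv 2 = k := by omega
    have e2 : (n + 5 * l).fdiv 2 = k := by omega
    have e3 : (n - 1 + 5 * l).fdiv 2 = k - 1 := by omega
    have e5 : (n + 5 * (l - 1) + 1).fdiv 2 = k - 2 := by omega
    rw [e1, e2, e3, e5, if_neg (by omega), if_pos (by omega)]
    have hp2 := C_pascal (n - 1) (k - 1) (by omega)
    rw [show n - 1 + 1 = n by ring] at hp2
    have hsgn : (-1 : ℤ) ^ (l - 1).natAbs = -(-1 : ℤ) ^ l.natAbs :=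
      negpow _ _ (by omega)
    rw [C_pascal n k (by omega), hp2, hsgn]
    have e6 : k - 1 - 1 = k - 2 := by ring
    rw [e6]
    ring
  · -- odd case : n + 5l = 2k + 1
    have e1 : (n + 1 + 5 * l).fdiv 2 = k + 1 := by omega
    have e2 : (n + 5 * l).fdiv 2 = k := by omega
    have e3 : (n - 1 + 5 * l).fdiv 2 = k := by omega
    have e4 : (n + 5 * l + 1).fdiv 2 = k + 1 := by omega
    rw [e1, e2, e3, e4, if_pos (by omega), if_neg (by omega)]
    have hp2 := C_pascal (n - 1) (k + 1) (by omega)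
    rw [show n - 1 + 1 = n by ring] at hp2
    rw [C_pascal n (k + 1) (by omega), hp2]
    have e6 : k + 1 - 1 = k := by ring
    rw [e6]
    ring

lemma w_vanish {n l : ℤ} (hn : 1 ≤ n) (h : l = n + 1 ∨ l = -(n + 2)) : w n l = 0 := by
  unfold w
  split_ifs with hif
  · have d := Int.fdiv_eq_ediv_of_nonneg (n + 5 * l + 1) (by norm_num : (0:ℤ) ≤ 2)
    rw [C_of_not (by omega), mul_zero]
  · rfl

lemma p_rec (n : ℤ) (hn : 0 ≤ n) : p (n + 1) = p n + p (n - 1) := by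
  rcases eq_or_lt_of_le hn with h0 | h1
  · rw [← h0]
    norm_num [p_zero, p_one, p_neg_one]
  · have hn1 : (1:ℤ) ≤ n := h1
    rw [p_sum (by omega : (0:ℤ) ≤ n + 1) (le_refl (n + 1)),
      p_sum hn (by omega : n ≤ n + 1),
      p_sum (by omega : (0:ℤ) ≤ n - 1) (by omega : n - 1 ≤ n + 1)]
    rw [Finset.sum_congr rfl (fun l _ => key n l hn1)]
    rw [Finset.sum_add_distrib, Finset.sum_add_distrib, Finset.sum_sub_distrib]
    have hshift : ∑ l ∈ Finset.Icc (-(n + 1)) (n + 1), w n (l - 1)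
        = ∑ l ∈ Finset.Icc (-(n + 2)) n, w n l := by
      apply Finset.sum_nbij' (fun l => l - 1) (fun l => l + 1)
      · intro a ha; simp only [Finset.mem_Icc] at *; omega
      · intro a ha; simp only [Finset.mem_Icc] at *; omega
      · intro a _; ring
      · intro a _; ring
      · intro a _; rfl
    have h2 : ∑ l ∈ Finset.Icc (-(n + 2)) n, w n l
        = ∑ l ∈ Finset.Icc (-(n + 2)) (n + 1), w n l := by
      apply Finset.sum_subset
      · intro x hx; simp only [Finset.mem_Icc] at *; omega
      · intro x hx1 hx2
        simp only [Finset.mem_Icc] at hx1 hx2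
        exact w_vanish hn1 (Or.inl (by omega))
    have h3 : ∑ l ∈ Finset.Icc (-(n + 1)) (n + 1), w n l
        = ∑ l ∈ Finset.Icc (-(n + 2)) (n + 1), w n l := by
      apply Finset.sum_subset
      · intro x hx; simp only [Finset.mem_Icc] at *; omega
      · intro x hx1 hx2
        simp only [Finset.mem_Icc] at hx1 hx2
        exact w_vanish hn1 (Or.inr (by omega))
    rw [hshift, h2, h3]
    ring

lemma p_nat (m : ℕ) : p m = (Nat.fib (m + 1) : ℤ) := by
  induction m using Nat.twoStepInduction with
  | zero => simpa using p_zero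
  | one => simpa using p_one
  | more m ih1 ih2 =>
    have h := p_rec (m + 1) (by positivity)
    have e1 : ((m:ℤ) + 1) + 1 = ((m + 2 : ℕ) : ℤ) := by push_cast; ring
    have e2 : ((m:ℤ) + 1) = ((m + 1 : ℕ) : ℤ) := by push_cast; ring
    have e3 : ((m + 1 : ℕ) : ℤ) - 1 = ((m : ℕ) : ℤ) := by push_cast; ring
    rw [e1, e2, e3] at h
    rw [h, ih1, ih2]
    have hfib : Nat.fib (m + 2 + 1) = Nat.fib (m + 1 + 1) + Nat.fib (m + 1) := by
      rw [Nat.fib_add_two]; ring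
    rw [hfib]
    push_cast
    ring

end GS1Aux

theorem gs1_amateur_fib (n : ℤ) (hn : 0 ≤ n) :
    p n = (Nat.fib (n.toNat + 1) : ℤ) := by
  have h := GS1Aux.p_nat n.toNat
  rwa [show ((n.toNat : ℕ) : ℤ) = n by omega] at h
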